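/- For every θ ∈ ℝ there exists a constant C > 0 such that for every z = ((s_i, v_i))_{i≥1} ∈ Z↓: 1 + θ·(log v_1)·1_{|log v_1| ≤ 1} − Σ_{i≥1} v_i^θ ≤ C·((log v_1)² ∧ 1), where the left-hand side is interpreted as −∞ if the sum diverges. Consequently, for any measure Λ on Z↓ satisfying ∫_{Z↓} (1 − s_1·1_{v_1>0} + (log v_1)² ∧ 1) Λ(dz) < ∞, the negative part of the function z ↦ Σ_{i≥1} v_i^θ − 1 − θ·(log v_1)·1_{|log v_1| ≤ 1} is Λ-integrable. -/

import Mathlib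

open scoped ENNReal

/-- Lexicographic order on pairs `(s, v)`. -/
def lexLe (a b : ℝ × ℝ) : Prop := a.1 < b.1 ∨ (a.1 = b.1 ∧ a.2 ≤ b.2)

/-- Membership in the space `Z↓`. -/
def MemZdown (z : ℕ → ℝ × ℝ) : Prop :=
  (∀ k, (z k).1 ∈ Set.Icc (0:ℝ) 1 ∧ 0 ≤ (z k).2) ∧
  (∀ k, lexLe (z (k + 1)) (z k)) ∧
  (∀ n, ∑ k ∈ Finset.range n, (z k).1 ≤ 1) ∧
  (∀ k, (z k).1 = 0 → (z k).2 = 0)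

/-- `(log v)·1_{|log v| ≤ 1}`, interpreted as `0` when `v = 0`. -/
noncomputable def logT (v : ℝ) : ℝ := if |Real.log v| ≤ 1 then Real.log v else 0

/-- `(log v)² ∧ 1`, interpreted as `1` when `v = 0`. -/
noncomputable def sqLogMin1 (v : ℝ) : ℝ := if v = 0 then 1 else min ((Real.log v) ^ 2) 1

/-- The indicator `1_{v > 0}`. -/
noncomputable def ind01 (v : ℝ) : ℝ := if 0 < v then 1 else 0

/-- `v^θ` with the convention `0^θ = 0`, as an extended nonnegative real. -/
noncomputable def powE (v θ : ℝ) : ℝ≥0∞ := if v = 0 then 0 else ENNReal.ofReal (v ^ θ)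

lemma key_pointwise (θ v : ℝ) (hv : 0 ≤ v) :
    ENNReal.ofReal (1 + θ * logT v) ≤ ENNReal.ofReal (sqLogMin1 v) + powE v θ := by
  by_cases h0 : v = 0
  · subst h0
    simp [logT, sqLogMin1, powE, Real.log_zero]
  · have hvpos : 0 < v := lt_of_le_of_ne hv (Ne.symm h0)
    have hpow : powE v θ = ENNReal.ofReal (v ^ θ) := by simp [powE, h0]
    have hpow0 : 0 ≤ v ^ θ := Real.rpow_nonneg hv θ
    have hsq0 : (0:ℝ) ≤ sqLogMin1 v := by
      simp only [sqLogMin1, if_neg h0]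
      exact le_min (sq_nonneg _) zero_le_one
    rw [hpow, ← ENNReal.ofReal_add hsq0 hpow0]
    apply ENNReal.ofReal_le_ofReal
    have hrw : v ^ θ = Real.exp (Real.log v * θ) := Real.rpow_def_of_pos hvpos θ
    rw [hrw]
    set t := Real.log v with ht
    simp only [logT, sqLogMin1, if_neg h0, ← ht]
    by_cases hT : |t| ≤ 1
    · rw [if_pos hT]
      have h1 : θ * t + 1 ≤ Real.exp (θ * t) := Real.add_one_le_exp _
      have h2 : (0:ℝ) ≤ min (t ^ 2) 1 := le_min (sq_nonneg _) zero_le_one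
      rw [mul_comm t θ]
      linarith
    · rw [if_neg hT]
      have h1 : (1:ℝ) < |t| := not_le.mp hT
      have h2 : (1:ℝ) ≤ t ^ 2 := by nlinarith [sq_abs t]
      have h3 : min (t ^ 2) 1 = 1 := min_eq_right h2
      have h4 : 0 < Real.exp (t * θ) := Real.exp_pos _
      rw [h3]
      linarith

lemma key_bound (θ : ℝ) (z : ℕ → ℝ × ℝ) (hz : MemZdown z) :
    ENNReal.ofReal (1 + θ * logT (z 0).2) ≤
      ENNReal.ofReal (1 * sqLogMin1 (z 0).2) + ∑' i : ℕ, powE (z i).2 θ := by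
  have h0 := key_pointwise θ (z 0).2 (hz.1 0).2
  rw [one_mul]
  exact h0.trans (add_le_add le_rfl (ENNReal.le_tsum 0))

open MeasureTheory in
/-- **Integrability of the negative part of the cumulant integrand.** -/
theorem cumulant_integrand_negative_part (θ : ℝ) :
    (∃ C : ℝ, 0 < C ∧ ∀ z : ℕ → ℝ × ℝ, MemZdown z →
      ENNReal.ofReal (1 + θ * logT (z 0).2) ≤
        ENNReal.ofReal (C * sqLogMin1 (z 0).2) + ∑' i : ℕ, powE (z i).2 θ) ∧
    (∀ Λ : Measure (ℕ → ℝ × ℝ), Λ {z | ¬ MemZdown z} = 0 →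
      (∫⁻ z, ENNReal.ofReal (1 - (z 0).1 * ind01 (z 0).2 + sqLogMin1 (z 0).2) ∂Λ) ≠ ⊤ →
      (∫⁻ z, (ENNReal.ofReal (1 + θ * logT (z 0).2) - ∑' i : ℕ, powE (z i).2 θ) ∂Λ) ≠ ⊤) := by
  constructor
  · exact ⟨1, one_pos, key_bound θ⟩
  · intro Λ hΛ hfin
    have hae : ∀ᵐ z ∂Λ, MemZdown z := by
      rw [MeasureTheory.ae_iff]; exact hΛ
    have hmono : (∫⁻ z, (ENNReal.ofReal (1 + θ * logT (z 0).2) - ∑' i : ℕ, powE (z i).2 θ) ∂Λ)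
        ≤ ∫⁻ z, ENNReal.ofReal (1 - (z 0).1 * ind01 (z 0).2 + sqLogMin1 (z 0).2) ∂Λ := by
      refine MeasureTheory.lintegral_mono_ae ?_
      filter_upwards [hae] with z hz
      have h1 : ENNReal.ofReal (1 + θ * logT (z 0).2) - (∑' i : ℕ, powE (z i).2 θ)
          ≤ ENNReal.ofReal (1 * sqLogMin1 (z 0).2) :=
        tsub_le_iff_right.mpr (key_bound θ z hz)
      refine h1.trans (ENNReal.ofReal_le_ofReal ?_)
      rw [one_mul]
      have hs := (hz.1 0).1
      have hind : (z 0).1 * ind01 (z 0).2 ≤ 1 := by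
        by_cases hp : 0 < (z 0).2
        · simp only [ind01, if_pos hp, mul_one]; exact hs.2
        · simp only [ind01, if_neg hp, mul_zero]; exact zero_le_one
      linarith
    exact ne_top_of_le_ne_top hfin hmono
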